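/- Let X be a GC₄-set of 15 nodes with no 5 collinear nodes. If three nodes of X use a common 4-node line ℓ, then these three nodes share two further 4-node lines: there exist lines ℓ', ℓ'' each containing exactly 4 nodes of X such that ℓ·ℓ'·ℓ'' divides the fundamental polynomial of each of the three nodes. -/

import Mathlib

open MvPolynomial

noncomputable section
open scoped Classical

/-- Bivariate real polynomials. -/
abbrev Poly2 := MvPolynomial (Fin 2) ℝ

/-- Evaluation of a bivariate polynomial at a point of the plane. -/
def evalPt (A : Fin 2 → ℝ) (p : Poly2) : ℝ := MvPolynomial.eval A p

/-- A line is (identified with) a polynomial of total degree 1. -/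
def IsLine (ℓ : Poly2) : Prop := ℓ.totalDegree = 1

/-- `X` is `n`-poised: unique interpolation from Π_n at the nodes of `X`. -/
def Poised (n : ℕ) (X : Finset (Fin 2 → ℝ)) : Prop :=
  ∀ c : (Fin 2 → ℝ) → ℝ,
    ∃! p : Poly2, p.totalDegree ≤ n ∧ ∀ A ∈ X, evalPt A p = c A

/-- `p` is an `n`-fundamental polynomial of the node `A` of `X`. -/
def IsFund (n : ℕ) (X : Finset (Fin 2 → ℝ)) (A : Fin 2 → ℝ) (p : Poly2) : Prop :=
  p.totalDegree ≤ n ∧ evalPt A p = 1 ∧ ∀ B ∈ X, B ≠ A → evalPt B p = 0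

/-- A `GC_n`-set: an `n`-poised set all of whose nodes have fundamental
polynomials that are products of `n` linear factors. -/
def GCSet (n : ℕ) (X : Finset (Fin 2 → ℝ)) : Prop :=
  Poised n X ∧
    ∀ A ∈ X, ∃ f : Fin n → Poly2, (∀ i, IsLine (f i)) ∧ IsFund n X A (∏ i, f i)

/-- The node `A` uses the line `ℓ`: `ℓ` divides a fundamental polynomial of `A`. -/
def Uses (n : ℕ) (X : Finset (Fin 2 → ℝ)) (A : Fin 2 → ℝ) (ℓ : Poly2) : Prop :=
  ∃ p, IsFund n X A p ∧ ℓ ∣ p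

/-- The nodes of `X` lying on the line `ℓ`. -/
def nodesOn (X : Finset (Fin 2 → ℝ)) (ℓ : Poly2) : Finset (Fin 2 → ℝ) :=
  X.filter (fun A => evalPt A ℓ = 0)

/-- `X` contains no 5 collinear nodes. -/
def NoFiveCollinear (X : Finset (Fin 2 → ℝ)) : Prop :=
  ∀ ℓ : Poly2, IsLine ℓ → (nodesOn X ℓ).card ≤ 4

namespace Stmt7Aux

abbrev Pt := Fin 2 → ℝ

lemma evalPt_mul (P : Pt) (p q : Poly2) : evalPt P (p * q) = evalPt P p * evalPt P q := by
  simp [evalPt]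

lemma evalPt_prod {ι : Type*} (P : Pt) (s : Finset ι) (f : ι → Poly2) :
    evalPt P (∏ i ∈ s, f i) = ∏ i ∈ s, evalPt P (f i) := by
  simp [evalPt]

lemma pt_eq_iff {P Q : Pt} : P = Q ↔ P 0 = Q 0 ∧ P 1 = Q 1 := by
  constructor
  · rintro rfl; exact ⟨rfl, rfl⟩
  · rintro ⟨h0, h1⟩; funext i; fin_cases i <;> assumption

lemma pt_ne {P Q : Pt} (h : P ≠ Q) : Q 0 - P 0 ≠ 0 ∨ Q 1 - P 1 ≠ 0 := by
  by_contra hc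
  push_neg at hc
  exact h (pt_eq_iff.mpr ⟨by linarith [hc.1], by linarith [hc.2]⟩).symm

/-- collinearity of three points -/
def Col (P Q R : Pt) : Prop :=
  (Q 0 - P 0) * (R 1 - P 1) - (Q 1 - P 1) * (R 0 - P 0) = 0

lemma cross_engine {u0 u1 x0 x1 y0 y1 : ℝ} (hu : u0 ≠ 0 ∨ u1 ≠ 0)
    (hx : u0 * x1 - u1 * x0 = 0) (hy : u0 * y1 - u1 * y0 = 0) :
    x0 * y1 - x1 * y0 = 0 := by
  rcases hu with h | h
  · have key : u0 * (x0 * y1 - x1 * y0) = x0 * (u0 * y1 - u1 * y0) - y0 * (u0 * x1 - u1 * x0) := by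
      ring
    rw [hx, hy] at key
    simpa [h] using key
  · have key : u1 * (x0 * y1 - x1 * y0) = x1 * (u0 * y1 - u1 * y0) - y1 * (u0 * x1 - u1 * x0) := by
      ring
    rw [hx, hy] at key
    simpa [h] using key

lemma Col.triv_left (P R : Pt) : Col P P R := by unfold Col; ring
lemma Col.triv_mid (P Q : Pt) : Col P Q P := by unfold Col; ring
lemma Col.triv_right (P Q : Pt) : Col P Q Q := by unfold Col; ring

/-- permutation invariance of collinearity (as sets of three points) -/
lemma col_perm {P Q R : Pt} (h : Col P Q R) :
    Col P R Q ∧ Col Q P R ∧ Col Q R P ∧ Col R P Q ∧ Col R Q P := by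
  unfold Col at *
  refine ⟨by linarith [h], by linarith [h], by linarith [h], by linarith [h], by linarith [h]⟩

/-- if D ≠ P and Q, R are both on the line through P and D then P Q R are collinear -/
lemma col_trans {P D Q R : Pt} (hPD : P ≠ D) (hQ : Col P Q D) (hR : Col P R D) :
    Col P Q R := by
  have hu := pt_ne hPD
  unfold Col at *
  have := cross_engine (u0 := D 0 - P 0) (u1 := D 1 - P 1)
    (x0 := Q 0 - P 0) (x1 := Q 1 - P 1) (y0 := R 0 - P 0) (y1 := R 1 - P 1) hu
    (by linarith [hQ]) (by linarith [hR])
  linarith [this]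

def mkL (a b c : ℝ) : Poly2 := C a * X 0 + C b * X 1 + C c

lemma evalPt_mkL (P : Pt) (a b c : ℝ) : evalPt P (mkL a b c) = a * P 0 + b * P 1 + c := by
  simp [mkL, evalPt]

lemma totalDegree_mkL_le (a b c : ℝ) : (mkL a b c).totalDegree ≤ 1 := by
  unfold mkL
  refine (totalDegree_add _ _).trans ?_
  refine max_le ?_ ?_
  · refine (totalDegree_add _ _).trans (max_le ?_ ?_)
    · exact (totalDegree_mul _ _).trans (by simp [totalDegree_X])
    · exact (totalDegree_mul _ _).trans (by simp [totalDegree_X])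
  · simp

lemma col_of_line {a b c : ℝ} (hab : a ≠ 0 ∨ b ≠ 0) {P Q R : Pt}
    (hP : a * P 0 + b * P 1 + c = 0) (hQ : a * Q 0 + b * Q 1 + c = 0)
    (hR : a * R 0 + b * R 1 + c = 0) : Col P Q R := by
  unfold Col
  refine cross_engine (u0 := b) (u1 := -a)
    (by rcases hab with h | h
        · exact Or.inr (by simpa using h)
        · exact Or.inl h) (by linarith) (by linarith)

/-- The line through two points `P ≠ Q`. -/
def line2 (P Q : Pt) : Poly2 :=
  mkL (Q 1 - P 1) (P 0 - Q 0) (-(Q 1 - P 1) * P 0 - (P 0 - Q 0) * P 1)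

lemma evalPt_line2 (P Q R : Pt) :
    evalPt R (line2 P Q) = -((Q 0 - P 0) * (R 1 - P 1) - (Q 1 - P 1) * (R 0 - P 0)) := by
  rw [line2, evalPt_mkL]; ring

lemma evalPt_line2_eq_zero_iff {P Q R : Pt} : evalPt R (line2 P Q) = 0 ↔ Col P Q R := by
  rw [evalPt_line2]; unfold Col; constructor <;> intro h <;> linarith

/-- Line through `P` that avoids `D` (for `D ≠ P`). -/
def lineAvoid (P D : Pt) : Poly2 :=
  mkL (D 0 - P 0) (D 1 - P 1) (-(D 0 - P 0) * P 0 - (D 1 - P 1) * P 1)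

lemma evalPt_lineAvoid (P D R : Pt) :
    evalPt R (lineAvoid P D) = (D 0 - P 0) * (R 0 - P 0) + (D 1 - P 1) * (R 1 - P 1) := by
  rw [lineAvoid, evalPt_mkL]; ring

lemma evalPt_lineAvoid_self (P D : Pt) : evalPt P (lineAvoid P D) = 0 := by
  rw [evalPt_lineAvoid]; ring

lemma evalPt_lineAvoid_ne (P D : Pt) (h : D ≠ P) : evalPt D (lineAvoid P D) ≠ 0 := by
  rw [evalPt_lineAvoid]
  intro hc
  rcases pt_ne (Ne.symm h) with h0 | h0
  · nlinarith [mul_self_nonneg (D 1 - P 1), mul_self_pos.mpr h0]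
  · nlinarith [mul_self_nonneg (D 0 - P 0), mul_self_pos.mpr h0]

lemma totalDegree_line2_le (P Q : Pt) : (line2 P Q).totalDegree ≤ 1 :=
  totalDegree_mkL_le _ _ _

lemma totalDegree_lineAvoid_le (P D : Pt) : (lineAvoid P D).totalDegree ≤ 1 :=
  totalDegree_mkL_le _ _ _

/-- Structure of polynomials of total degree at most 1. -/
lemma exists_mkL_rep {p : Poly2} (hp : p.totalDegree ≤ 1) :
    ∃ a b c : ℝ, p = mkL a b c := by
  have d01 : (Finsupp.single (0 : Fin 2) 1 : Fin 2 →₀ ℕ) ≠ Finsupp.single 1 1 := by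
    intro h; simpa using DFunLike.congr_fun h 0
  have d10 := d01.symm
  have d0z : (Finsupp.single (0 : Fin 2) 1 : Fin 2 →₀ ℕ) ≠ 0 := by
    intro h; simpa using DFunLike.congr_fun h 0
  have dz0 := d0z.symm
  have d1z : (Finsupp.single (1 : Fin 2) 1 : Fin 2 →₀ ℕ) ≠ 0 := by
    intro h; simpa using DFunLike.congr_fun h 1
  have dz1 := d1z.symm
  refine ⟨coeff (Finsupp.single 0 1) p, coeff (Finsupp.single 1 1) p, coeff 0 p, ?_⟩
  apply MvPolynomial.ext
  intro s
  rw [mkL, coeff_add, coeff_add, coeff_C_mul, coeff_C_mul, coeff_X', coeff_X', coeff_C]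
  by_cases c1 : s = Finsupp.single 0 1
  · subst c1
    rw [if_pos rfl, if_neg d10, if_neg dz0]; ring
  by_cases c2 : s = Finsupp.single 1 1
  · subst c2
    rw [if_neg d01, if_pos rfl, if_neg dz1]; ring
  by_cases c3 : s = 0
  · subst c3
    rw [if_neg d0z, if_neg d1z, if_pos rfl]; ring
  · rw [if_neg (fun h => c1 h.symm), if_neg (fun h => c2 h.symm), if_neg (fun h => c3 h.symm)]
    simp only [mul_zero, add_zero, zero_add]
    apply MvPolynomial.notMem_support_iff.mp
    intro hmem
    have hs2 : s = Finsupp.single 0 (s 0) + Finsupp.single 1 (s 1) := by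
      ext i; fin_cases i <;> simp [Finsupp.single_apply]
    have hsum : s.sum (fun _ e => e) = s 0 + s 1 := by
      rw [Finsupp.sum_fintype] <;> simp [Fin.sum_univ_two]
    have hle : s 0 + s 1 ≤ 1 := by
      rw [← hsum]; exact (le_totalDegree hmem).trans hp
    have hcases : (s 0 = 0 ∧ s 1 = 0) ∨ (s 0 = 1 ∧ s 1 = 0) ∨ (s 0 = 0 ∧ s 1 = 1) := by omega
    rcases hcases with ⟨h0', h1'⟩ | ⟨h0', h1'⟩ | ⟨h0', h1'⟩
    · exact c3 (by rw [hs2, h0', h1']; simp)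
    · exact c1 (by rw [hs2, h0', h1']; simp)
    · exact c2 (by rw [hs2, h0', h1']; simp)

/-! ### Substitution framework for a line with nonzero `y`-coefficient -/

/-- substitute `y := -(a/b) x - c/b` -/
def sig (a b c : ℝ) : Poly2 →ₐ[ℝ] Polynomial ℝ :=
  aeval ![Polynomial.X, Polynomial.C (-(a / b)) * Polynomial.X + Polynomial.C (-(c / b))]

/-- the reverse embedding `x ↦ x` -/
def bet : Polynomial ℝ →ₐ[ℝ] Poly2 := Polynomial.aeval (X 0 : Poly2)

lemma sig_X0 (a b c : ℝ) : sig a b c (X 0) = Polynomial.X := by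
  simp [sig]

lemma sig_X1 (a b c : ℝ) :
    sig a b c (X 1) = Polynomial.C (-(a / b)) * Polynomial.X + Polynomial.C (-(c / b)) := by
  simp [sig]

lemma sig_C (a b c r : ℝ) : sig a b c (C r) = Polynomial.C r := by
  simp [sig, algebraMap_eq]

lemma sig_mkL (a b c : ℝ) (hb : b ≠ 0) : sig a b c (mkL a b c) = 0 := by
  have hbb : (Polynomial.C b) * Polynomial.C (b⁻¹) = 1 := by
    rw [← Polynomial.C_mul, mul_inv_cancel₀ hb, Polynomial.C_1]
  rw [mkL, map_add, map_add, map_mul, map_mul, sig_X0, sig_X1, sig_C, sig_C, sig_C]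
  rw [show (-(a / b) : ℝ) = -(a * b⁻¹) by ring, map_neg, Polynomial.C_mul]
  rw [show (-(c / b) : ℝ) = -(c * b⁻¹) by ring, map_neg, Polynomial.C_mul]
  linear_combination (-(Polynomial.C a * Polynomial.X + Polynomial.C c)) * hbb

lemma bet_sig_X1 (a b c : ℝ) (hb : b ≠ 0) :
    (X 1 : Poly2) - bet (sig a b c (X 1)) = mkL a b c * C b⁻¹ := by
  have hbb : (C b : Poly2) * C b⁻¹ = 1 := by
    rw [← C_mul, mul_inv_cancel₀ hb, C_1]
  rw [sig_X1, map_add, map_mul]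
  have b1 : bet (Polynomial.C (-(a / b))) = C (-(a / b)) := by simp [bet]
  have b2 : bet (Polynomial.C (-(c / b))) = C (-(c / b)) := by simp [bet]
  have b3 : bet Polynomial.X = X 0 := by simp [bet]
  rw [b1, b2, b3, mkL]
  rw [show (-(a / b) : ℝ) = -(a * b⁻¹) by ring, map_neg, C_mul]
  rw [show (-(c / b) : ℝ) = -(c * b⁻¹) by ring, map_neg, C_mul]
  linear_combination (-(X 1 : Poly2)) * hbb

lemma mkL_dvd_sub_bet_sig (a b c : ℝ) (hb : b ≠ 0) (p : Poly2) :
    mkL a b c ∣ p - bet (sig a b c p) := by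
  induction p using MvPolynomial.induction_on with
  | C r => rw [sig_C]; simp [bet]
  | add p q hp hq =>
      have e : p + q - bet (sig a b c (p + q)) =
          (p - bet (sig a b c p)) + (q - bet (sig a b c q)) := by
        rw [map_add, map_add]; ring
      rw [e]; exact dvd_add hp hq
  | mul_X p i hp =>
      have key : mkL a b c ∣ (X i - bet (sig a b c (X i))) := by
        fin_cases i
        · show mkL a b c ∣ X 0 - bet (sig a b c (X 0))
          rw [sig_X0]
          simp [bet]
        · show mkL a b c ∣ X 1 - bet (sig a b c (X 1))
          rw [bet_sig_X1 a b c hb]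
          exact Dvd.intro _ rfl
      have decomp : p * X i - bet (sig a b c (p * X i)) =
          (p - bet (sig a b c p)) * X i +
            bet (sig a b c p) * (X i - bet (sig a b c (X i))) := by
        rw [map_mul, map_mul]; ring
      rw [decomp]
      exact dvd_add (hp.mul_right _) (key.mul_left _)

lemma dvd_of_sig_eq_zero {a b c : ℝ} (hb : b ≠ 0) {p : Poly2}
    (h : sig a b c p = 0) : mkL a b c ∣ p := by
  have := mkL_dvd_sub_bet_sig a b c hb p
  rw [h, map_zero, sub_zero] at this
  exact this

lemma sig_eq_zero_of_dvd {a b c : ℝ} (hb : b ≠ 0) {p : Poly2}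
    (h : mkL a b c ∣ p) : sig a b c p = 0 := by
  obtain ⟨r, rfl⟩ := h
  rw [map_mul, sig_mkL a b c hb, zero_mul]

lemma natDegree_sig_le (a b c : ℝ) (p : Poly2) :
    (sig a b c p).natDegree ≤ p.totalDegree := by
  conv_lhs => rw [p.as_sum]
  rw [map_sum]
  refine Polynomial.natDegree_sum_le_of_forall_le _ _ ?_
  intro s hs
  rw [sig, aeval_monomial]
  refine (Polynomial.natDegree_mul_le).trans ?_
  have h1 : (algebraMap ℝ (Polynomial ℝ) (coeff s p)).natDegree = 0 := by
    simp [Polynomial.algebraMap_eq]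
  rw [h1, zero_add]
  have h2 : s.prod (fun i k => (![Polynomial.X,
      Polynomial.C (-(a / b)) * Polynomial.X + Polynomial.C (-(c / b))] i) ^ k)
      = (Polynomial.X) ^ (s 0) *
        (Polynomial.C (-(a / b)) * Polynomial.X + Polynomial.C (-(c / b))) ^ (s 1) := by
    rw [Finsupp.prod_fintype]
    · rw [Fin.prod_univ_two]
      rfl
    · intro i; exact pow_zero _
  rw [h2]
  refine (Polynomial.natDegree_mul_le).trans ?_
  have h3 : (Polynomial.X ^ (s 0) : Polynomial ℝ).natDegree ≤ s 0 := by
    simpa using Polynomial.natDegree_pow_le (p := (Polynomial.X : Polynomial ℝ)) (n := s 0)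
  have h4 : ((Polynomial.C (-(a / b)) * Polynomial.X + Polynomial.C (-(c / b))) ^ (s 1)
      : Polynomial ℝ).natDegree ≤ s 1 := by
    refine (Polynomial.natDegree_pow_le).trans ?_
    have : (Polynomial.C (-(a / b)) * Polynomial.X + Polynomial.C (-(c / b))
        : Polynomial ℝ).natDegree ≤ 1 := by
      refine (Polynomial.natDegree_add_le _ _).trans (max_le ?_ ?_)
      · exact (Polynomial.natDegree_C_mul_le _ _).trans (by simp)
      · simp
    calc s 1 * (Polynomial.C (-(a / b)) * Polynomial.X + Polynomial.C (-(c / b))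
        : Polynomial ℝ).natDegree ≤ s 1 * 1 := Nat.mul_le_mul_left _ this
      _ = s 1 := by ring
  have hsum : s.sum (fun _ e => e) = s 0 + s 1 := by
    rw [Finsupp.sum_fintype] <;> simp [Fin.sum_univ_two]
  have hle : s 0 + s 1 ≤ p.totalDegree := by rw [← hsum]; exact le_totalDegree hs
  omega

lemma sig_eval {a b c : ℝ} (hb : b ≠ 0) {P : Pt} (hP : a * P 0 + b * P 1 + c = 0)
    (p : Poly2) : (sig a b c p).eval (P 0) = evalPt P p := by
  induction p using MvPolynomial.induction_on with
  | C r => rw [sig_C]; simp [evalPt]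
  | add p q hp hq => rw [map_add, Polynomial.eval_add, hp, hq]; simp [evalPt]
  | mul_X p i hp =>
      rw [map_mul, Polynomial.eval_mul, hp]
      have : (sig a b c (X i)).eval (P 0) = P i := by
        fin_cases i
        · show (sig a b c (X 0)).eval (P 0) = P 0
          rw [sig_X0]; simp
        · show (sig a b c (X 1)).eval (P 0) = P 1
          rw [sig_X1]
          simp only [Polynomial.eval_add, Polynomial.eval_mul, Polynomial.eval_C,
            Polynomial.eval_X]
          field_simp
          linear_combination (-1 : ℝ) * hP
      rw [this]
      simp [evalPt]

/-! ### swap machinery, vanishing lemma, primality -/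

lemma sw_comp_self : ⇑(Equiv.swap (0 : Fin 2) 1) ∘ ⇑(Equiv.swap (0 : Fin 2) 1) = id := by
  funext i
  simp

lemma pt_comp_sw_sw (P : Pt) : (P ∘ ⇑(Equiv.swap (0 : Fin 2) 1)) ∘ ⇑(Equiv.swap (0 : Fin 2) 1) = P := by
  rw [Function.comp_assoc, sw_comp_self]
  rfl

lemma rename_sw_mkL (a b c : ℝ) :
    rename ⇑(Equiv.swap (0 : Fin 2) 1) (mkL a b c) = mkL b a c := by
  rw [mkL, map_add, map_add, map_mul, map_mul, rename_C, rename_C, rename_C,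
    rename_X, rename_X]
  rw [Equiv.swap_apply_left, Equiv.swap_apply_right, mkL]
  ring

lemma vanish_dvd_core {a b c : ℝ} (hb : b ≠ 0) {p : Poly2} {d : ℕ}
    (hd : p.totalDegree ≤ d) {T : Finset Pt} (hT : d < T.card)
    (hline : ∀ P ∈ T, a * P 0 + b * P 1 + c = 0) (hvan : ∀ P ∈ T, evalPt P p = 0) :
    mkL a b c ∣ p := by
  apply dvd_of_sig_eq_zero hb
  apply Polynomial.eq_zero_of_natDegree_lt_card_of_eval_eq_zero' _ (T.image (fun P => P 0))
  · intro i hi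
    obtain ⟨P, hP, rfl⟩ : ∃ P ∈ T, P 0 = i := by simpa using hi
    rw [sig_eval hb (hline P hP)]
    exact hvan P hP
  · have hcard : (T.image (fun P => P 0)).card = T.card := by
      apply Finset.card_image_of_injOn
      intro P hP Q hQ h0
      have hP' := hline P hP
      have hQ' := hline Q hQ
      have h0' : P 0 = Q 0 := h0
      refine pt_eq_iff.mpr ⟨h0', ?_⟩
      have h2 : b * P 1 = b * Q 1 := by rw [← h0'] at hQ'; linarith
      exact mul_left_cancel₀ hb h2
    rw [hcard]
    exact lt_of_le_of_lt ((natDegree_sig_le a b c p).trans hd) hT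

lemma vanish_dvd {a b c : ℝ} (hab : a ≠ 0 ∨ b ≠ 0) {p : Poly2} {d : ℕ}
    (hd : p.totalDegree ≤ d) {T : Finset Pt} (hT : d < T.card)
    (hline : ∀ P ∈ T, a * P 0 + b * P 1 + c = 0) (hvan : ∀ P ∈ T, evalPt P p = 0) :
    mkL a b c ∣ p := by
  by_cases hb : b ≠ 0
  · exact vanish_dvd_core hb hd hT hline hvan
  push_neg at hb
  have ha : a ≠ 0 := hab.resolve_right (not_not.mpr hb)
  set e := ⇑(Equiv.swap (0 : Fin 2) 1) with he
  have key : mkL b a c ∣ rename e p := by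
    refine vanish_dvd_core (a := b) (b := a) (c := c) ha
      ((totalDegree_rename_le _ _).trans hd) (T := T.image (fun P => P ∘ e)) ?_ ?_ ?_
    · rwa [Finset.card_image_of_injective _ (fun P Q h => by
        have h2 := congrArg (fun (R : Pt) => R ∘ e) h
        rwa [pt_comp_sw_sw, pt_comp_sw_sw] at h2)]
    · intro P' hP'
      obtain ⟨P, hP, rfl⟩ : ∃ P ∈ T, P ∘ e = P' := by simpa using hP'
      have h1 : (P ∘ e) 0 = P 1 := by simp [he]
      have h2 : (P ∘ e) 1 = P 0 := by simp [he]
      rw [h1, h2]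
      linarith [hline P hP]
    · intro P' hP'
      obtain ⟨P, hP, rfl⟩ : ∃ P ∈ T, P ∘ e = P' := by simpa using hP'
      show MvPolynomial.eval (P ∘ e) (rename e p) = 0
      rw [eval_rename, pt_comp_sw_sw]
      exact hvan P hP
  have := map_dvd (rename e).toRingHom key
  simp only [AlgHom.toRingHom_eq_coe, RingHom.coe_coe] at this
  rw [rename_sw_mkL, rename_rename, sw_comp_self, rename_id] at this
  exact this

lemma prime_mkL_core {a b c : ℝ} (hb : b ≠ 0) : Prime (mkL a b c) := by
  refine ⟨?_, ?_, ?_⟩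
  · intro h0
    have h1 : evalPt ![0, (1 - c)/b] (mkL a b c) = 1 := by
      rw [evalPt_mkL]
      show a * 0 + b * ((1 - c)/b) + c = 1
      field_simp
      ring
    rw [h0] at h1
    simp [evalPt] at h1
  · intro hu
    obtain ⟨v, hv⟩ := isUnit_iff_exists_inv.mp hu
    have h2 := congrArg (sig a b c) hv
    rw [map_mul, sig_mkL _ _ _ hb, zero_mul, map_one] at h2
    exact zero_ne_one h2
  · intro x y hxy
    have hs := sig_eq_zero_of_dvd hb hxy
    rw [map_mul] at hs
    rcases mul_eq_zero.mp hs with h | h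
    · exact Or.inl (dvd_of_sig_eq_zero hb h)
    · exact Or.inr (dvd_of_sig_eq_zero hb h)

lemma prime_mkL {a b c : ℝ} (hab : a ≠ 0 ∨ b ≠ 0) : Prime (mkL a b c) := by
  by_cases hb : b ≠ 0
  · exact prime_mkL_core hb
  push_neg at hb
  have ha : a ≠ 0 := hab.resolve_right (not_not.mpr hb)
  have e := (renameEquiv ℝ (Equiv.swap (0 : Fin 2) 1)).toRingEquiv.toMulEquiv
  have hiff := MulEquiv.prime_iff (p := mkL a b c)
    ((renameEquiv ℝ (Equiv.swap (0 : Fin 2) 1)).toRingEquiv.toMulEquiv)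
  rw [← hiff]
  have : ((renameEquiv ℝ (Equiv.swap (0 : Fin 2) 1)).toRingEquiv.toMulEquiv) (mkL a b c)
      = mkL b a c := by
    show rename ⇑(Equiv.swap (0 : Fin 2) 1) (mkL a b c) = mkL b a c
    exact rename_sw_mkL a b c
  rw [this]
  exact prime_mkL_core ha

lemma coeff_mkL_X0 (a b c : ℝ) : coeff (Finsupp.single 0 1) (mkL a b c) = a := by
  have d10 : (Finsupp.single (1 : Fin 2) 1 : Fin 2 →₀ ℕ) ≠ Finsupp.single 0 1 := by
    intro h; simpa using DFunLike.congr_fun h 0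
  have dz0 : (0 : Fin 2 →₀ ℕ) ≠ Finsupp.single 0 1 := by
    intro h; simpa using DFunLike.congr_fun h 0
  rw [mkL, coeff_add, coeff_add, coeff_C_mul, coeff_C_mul, coeff_X', coeff_X', coeff_C,
    if_pos rfl, if_neg d10, if_neg dz0]
  ring

lemma coeff_mkL_X1 (a b c : ℝ) : coeff (Finsupp.single 1 1) (mkL a b c) = b := by
  have d01 : (Finsupp.single (0 : Fin 2) 1 : Fin 2 →₀ ℕ) ≠ Finsupp.single 1 1 := by
    intro h; simpa using DFunLike.congr_fun h 0
  have dz1 : (0 : Fin 2 →₀ ℕ) ≠ Finsupp.single 1 1 := by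
    intro h; simpa using DFunLike.congr_fun h 1
  rw [mkL, coeff_add, coeff_add, coeff_C_mul, coeff_C_mul, coeff_X', coeff_X', coeff_C,
    if_pos rfl, if_neg d01, if_neg dz1]
  ring

lemma isLine_mkL {a b c : ℝ} (hab : a ≠ 0 ∨ b ≠ 0) : IsLine (mkL a b c) := by
  have hle := totalDegree_mkL_le a b c
  rcases Nat.lt_or_ge (mkL a b c).totalDegree 1 with h | h
  · exfalso
    have h0 : (mkL a b c).totalDegree < (Finsupp.single (0 : Fin 2) 1).sum fun _ e => e := by
      rw [Finsupp.sum_single_index] <;> omega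
    have h1 : (mkL a b c).totalDegree < (Finsupp.single (1 : Fin 2) 1).sum fun _ e => e := by
      rw [Finsupp.sum_single_index] <;> omega
    have ha := coeff_eq_zero_of_totalDegree_lt h0
    have hb := coeff_eq_zero_of_totalDegree_lt h1
    rw [coeff_mkL_X0] at ha
    rw [coeff_mkL_X1] at hb
    tauto
  · exact le_antisymm hle h

lemma isLine_line2 {P Q : Pt} (h : P ≠ Q) : IsLine (line2 P Q) := by
  apply isLine_mkL
  rcases pt_ne h with h0 | h0
  · exact Or.inr (by simpa using fun hc => h0 (by linarith))
  · exact Or.inl h0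

/-- two points on a line, used for proportionality -/
lemma line_two_points {a b c : ℝ} (hab : a ≠ 0 ∨ b ≠ 0) :
    ∃ P Q : Pt, P ≠ Q ∧ (a * P 0 + b * P 1 + c = 0) ∧ (a * Q 0 + b * Q 1 + c = 0) ∧
      Q 0 - P 0 = -b ∧ Q 1 - P 1 = a := by
  have hs : a^2 + b^2 ≠ 0 := by
    rcases hab with h | h <;> positivity
  refine ⟨![-(a*c)/(a^2+b^2), -(b*c)/(a^2+b^2)],
    ![-(a*c)/(a^2+b^2) - b, -(b*c)/(a^2+b^2) + a], ?_, ?_, ?_, ?_, ?_⟩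
  · intro hPQ
    have h0 := congrFun hPQ 0
    have h1 := congrFun hPQ 1
    simp only [Matrix.cons_val_zero, Matrix.cons_val_one, Matrix.head_cons] at h0 h1
    rcases hab with h | h
    · exact h (by linarith)
    · exact h (by linarith)
  · show a * (-(a*c)/(a^2+b^2)) + b * (-(b*c)/(a^2+b^2)) + c = 0
    field_simp
    ring
  · show a * (-(a*c)/(a^2+b^2) - b) + b * (-(b*c)/(a^2+b^2) + a) + c = 0
    field_simp
    ring
  · show (-(a*c)/(a^2+b^2) - b) - (-(a*c)/(a^2+b^2)) = -b
    ring
  · show (-(b*c)/(a^2+b^2) + a) - (-(b*c)/(a^2+b^2)) = a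
    ring

lemma line_proportional {a b c a' b' c' : ℝ} (hab : a ≠ 0 ∨ b ≠ 0) (hab' : a' ≠ 0 ∨ b' ≠ 0)
    (hz : ∀ P : Pt, a * P 0 + b * P 1 + c = 0 → a' * P 0 + b' * P 1 + c' = 0) :
    ∃ κ : ℝ, κ ≠ 0 ∧ mkL a' b' c' = C κ * mkL a b c := by
  obtain ⟨P, Q, hPQ, hP, hQ, hd0, hd1⟩ := line_two_points hab
  have hP' := hz P hP
  have hQ' := hz Q hQ
  have hrel : a * b' = a' * b := by
    have : a' * (Q 0 - P 0) + b' * (Q 1 - P 1) = 0 := by linarith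
    rw [hd0, hd1] at this
    linarith
  have key : ∃ κ : ℝ, κ ≠ 0 ∧ a' = κ * a ∧ b' = κ * b := by
    by_cases ha : a ≠ 0
    · refine ⟨a' / a, ?_, by field_simp, by field_simp; linarith [hrel]⟩
      intro h
      have ha' : a' = 0 := by
        have := div_eq_zero_iff.mp h
        tauto
      have hb' : b' = 0 := by
        have h2 : a * b' = 0 := by rw [hrel, ha']; ring
        rcases mul_eq_zero.mp h2 with h' | h'
        · exact absurd h' ha
        · exact h'
      tauto
    · push_neg at ha
      have hb : b ≠ 0 := by tauto
      have ha' : a' = 0 := by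
        have h2 : a' * b = 0 := by rw [← hrel, ha]; ring
        rcases mul_eq_zero.mp h2 with h' | h'
        · exact h'
        · exact absurd h' hb
      refine ⟨b' / b, ?_, by rw [ha', ha]; ring, by field_simp⟩
      intro h
      have hb' : b' = 0 := by
        have := div_eq_zero_iff.mp h
        tauto
      tauto
  obtain ⟨κ, hκ, hA, hB⟩ := key
  have hC : c' = κ * c := by
    have h1 : a' * P 0 + b' * P 1 + c' = 0 := hP'
    have h2 : κ * (a * P 0 + b * P 1 + c) = 0 := by rw [hP]; ring
    rw [hA, hB] at h1
    linarith
  refine ⟨κ, hκ, ?_⟩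
  rw [hA, hB, hC, mkL, mkL]
  rw [C_mul, C_mul, C_mul]
  ring

/-! ### non-separability machinery -/

/-- `S` is non-separable in degree `n`: no polynomial of degree at most `n`
separates a point of `S` from the rest. -/
def NS (n : ℕ) (S : Finset Pt) : Prop :=
  ∀ D ∈ S, ∀ q : Poly2, q.totalDegree ≤ n →
    (∀ P ∈ S, P ≠ D → evalPt P q = 0) → evalPt D q = 0

lemma NS.card_gt {n : ℕ} {S : Finset Pt} (h : NS n S) (hne : S.Nonempty)
    (hc : S.card ≤ n + 1) : False := by
  obtain ⟨D, hD⟩ := hne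
  set q : Poly2 := ∏ E ∈ S.erase D, lineAvoid E D with hq
  have hdeg : q.totalDegree ≤ n := by
    refine (totalDegree_finset_prod _ _).trans ?_
    calc ∑ E ∈ S.erase D, (lineAvoid E D).totalDegree
        ≤ ∑ E ∈ S.erase D, 1 := Finset.sum_le_sum (fun E _ => totalDegree_lineAvoid_le E D)
      _ = (S.erase D).card := by simp
      _ ≤ n := by rw [Finset.card_erase_of_mem hD]; omega
  have hvan : ∀ P ∈ S, P ≠ D → evalPt P q = 0 := by
    intro P hP hPD
    rw [hq, evalPt_prod]
    exact Finset.prod_eq_zero (Finset.mem_erase.mpr ⟨hPD, hP⟩) (evalPt_lineAvoid_self P D)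
  have hval := h D hD q hdeg hvan
  rw [hq, evalPt_prod] at hval
  obtain ⟨E, hE, hE0⟩ := Finset.prod_eq_zero_iff.mp hval
  exact evalPt_lineAvoid_ne E D (Finset.mem_erase.mp hE).1.symm hE0

lemma NS.step {n : ℕ} {S : Finset Pt} (h : NS (n + 1) S) {m : Poly2}
    (hm : m.totalDegree ≤ 1) :
    NS n (S.filter (fun P => evalPt P m ≠ 0)) := by
  intro D hD q hq hv
  obtain ⟨hDS, hDm⟩ := Finset.mem_filter.mp hD
  have hdeg : (m * q).totalDegree ≤ n + 1 := by
    refine (totalDegree_mul _ _).trans ?_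
    omega
  have hvan : ∀ P ∈ S, P ≠ D → evalPt P (m * q) = 0 := by
    intro P hP hPD
    rw [evalPt_mul]
    by_cases hPm : evalPt P m = 0
    · rw [hPm, zero_mul]
    · rw [hv P (Finset.mem_filter.mpr ⟨hP, hPm⟩) hPD, mul_zero]
  have := h D hDS (m * q) hdeg hvan
  rw [evalPt_mul] at this
  exact (mul_eq_zero.mp this).resolve_left hDm

lemma card_four_set {a b c d : Pt} (hab : a ≠ b) (hac : a ≠ c) (had : a ≠ d)
    (hbc : b ≠ c) (hbd : b ≠ d) (hcd : c ≠ d) : ({a, b, c, d} : Finset Pt).card = 4 := by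
  rw [Finset.card_insert_of_notMem (by simp [hab, hac, had]),
    Finset.card_insert_of_notMem (by simp [hbc, hbd]),
    Finset.card_insert_of_notMem (by simp [hcd]), Finset.card_singleton]

lemma extract3 {T : Finset Pt} (h : T.card = 3) :
    ∃ P Q R : Pt, P ≠ Q ∧ P ≠ R ∧ Q ≠ R ∧ T = {P, Q, R} :=
  Finset.card_eq_three.mp h

lemma extract4 {T : Finset Pt} (h : T.card = 4) :
    ∃ P Q R W : Pt, P ≠ Q ∧ P ≠ R ∧ P ≠ W ∧ Q ≠ R ∧ Q ≠ W ∧ R ≠ W ∧ T = {P, Q, R, W} := by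
  have hne : T.Nonempty := by rw [← Finset.card_pos, h]; omega
  obtain ⟨P, hP⟩ := hne
  have h3 : (T.erase P).card = 3 := by rw [Finset.card_erase_of_mem hP, h]
  obtain ⟨Q, R, W, hQR, hQW, hRW, hset⟩ := extract3 h3
  have hQ : Q ∈ T.erase P := by rw [hset]; simp
  have hR : R ∈ T.erase P := by rw [hset]; simp
  have hW : W ∈ T.erase P := by rw [hset]; simp
  refine ⟨P, Q, R, W, (Finset.mem_erase.mp hQ).1.symm, (Finset.mem_erase.mp hR).1.symm,
    (Finset.mem_erase.mp hW).1.symm, hQR, hQW, hRW, ?_⟩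
  rw [show ({P, Q, R, W} : Finset Pt) = insert P {Q, R, W} from rfl, ← hset,
    Finset.insert_erase hP]

lemma extract5 {T : Finset Pt} (h : T.card = 5) :
    ∃ P Q R W V : Pt, P ≠ Q ∧ P ≠ R ∧ P ≠ W ∧ P ≠ V ∧ Q ≠ R ∧ Q ≠ W ∧ Q ≠ V ∧
      R ≠ W ∧ R ≠ V ∧ W ≠ V ∧ T = {P, Q, R, W, V} := by
  have hne : T.Nonempty := by rw [← Finset.card_pos, h]; omega
  obtain ⟨P, hP⟩ := hne
  have h4 : (T.erase P).card = 4 := by rw [Finset.card_erase_of_mem hP, h]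
  obtain ⟨Q, R, W, V, hQR, hQW, hQV, hRW, hRV, hWV, hset⟩ := extract4 h4
  have hQ : Q ∈ T.erase P := by rw [hset]; simp
  have hR : R ∈ T.erase P := by rw [hset]; simp
  have hW : W ∈ T.erase P := by rw [hset]; simp
  have hV : V ∈ T.erase P := by rw [hset]; simp
  refine ⟨P, Q, R, W, V, (Finset.mem_erase.mp hQ).1.symm, (Finset.mem_erase.mp hR).1.symm,
    (Finset.mem_erase.mp hW).1.symm, (Finset.mem_erase.mp hV).1.symm,
    hQR, hQW, hQV, hRW, hRV, hWV, ?_⟩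
  rw [show ({P, Q, R, W, V} : Finset Pt) = insert P {Q, R, W, V} from rfl, ← hset,
    Finset.insert_erase hP]

/-- the set of points of `S` on the line through `U` and `V` -/
def colF (S : Finset Pt) (U V : Pt) : Finset Pt := S.filter (fun R => Col U V R)

lemma mem_colF {S : Finset Pt} {U V P : Pt} : P ∈ colF S U V ↔ P ∈ S ∧ Col U V P :=
  Finset.mem_filter

lemma NS2_classify {T : Finset Pt} (h : NS 2 T) (hne : T.Nonempty) (hc : T.card ≤ 4) :
    T.card = 4 ∧ ∃ U ∈ T, ∃ V ∈ T, U ≠ V ∧ ∀ R ∈ T, Col U V R := by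
  have h4 : T.card = 4 := by
    rcases Nat.lt_or_ge T.card 4 with hlt | hge
    · exact absurd (h.card_gt hne (by omega)) (fun t => t)
    · omega
  obtain ⟨D, hD⟩ := hne
  have he : (T.erase D).card = 3 := by rw [Finset.card_erase_of_mem hD, h4]
  obtain ⟨P, Q, R, hPQ, hPR, hQR, hset⟩ := extract3 he
  have hPe : P ∈ T.erase D := by rw [hset]; simp
  have hQe : Q ∈ T.erase D := by rw [hset]; simp
  have hRe : R ∈ T.erase D := by rw [hset]; simp
  have hPT : P ∈ T := Finset.mem_of_mem_erase hPe
  have hPD : P ≠ D := (Finset.mem_erase.mp hPe).1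
  have hQD : Q ≠ D := (Finset.mem_erase.mp hQe).1
  have hRD : R ≠ D := (Finset.mem_erase.mp hRe).1
  -- separator tool: for a 3-element decomposition {U,V,W} of T.erase D
  have sep : ∀ U V W : Pt, W ≠ D → (∀ E ∈ T, E ≠ D → E = U ∨ E = V ∨ E = W) →
      ¬ Col U V D → False := by
    intro U V W hWD hcover hncol
    set q : Poly2 := line2 U V * lineAvoid W D with hq
    have hdeg : q.totalDegree ≤ 2 := by
      refine (totalDegree_mul _ _).trans ?_
      have := totalDegree_line2_le U V
      have := totalDegree_lineAvoid_le W D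
      omega
    have hvan : ∀ E ∈ T, E ≠ D → evalPt E q = 0 := by
      intro E hE hED
      rw [hq, evalPt_mul]
      rcases hcover E hE hED with h' | h' | h'
      · rw [h', evalPt_line2_eq_zero_iff.mpr (Col.triv_mid U V), zero_mul]
      · rw [h', evalPt_line2_eq_zero_iff.mpr (Col.triv_right U V), zero_mul]
      · rw [h', evalPt_lineAvoid_self, mul_zero]
    have hval := h D hD q hdeg hvan
    rw [hq, evalPt_mul] at hval
    rcases mul_eq_zero.mp hval with h0 | h0
    · exact hncol (evalPt_line2_eq_zero_iff.mp h0)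
    · exact evalPt_lineAvoid_ne W D (Ne.symm hWD) h0
  have hcover : ∀ E ∈ T, E ≠ D → E = P ∨ E = Q ∨ E = R := by
    intro E hE hED
    have : E ∈ T.erase D := Finset.mem_erase.mpr ⟨hED, hE⟩
    rw [hset] at this
    simpa using this
  have c1 : Col P Q D := by
    by_contra hn
    exact sep P Q R hRD hcover hn
  have c2 : Col P R D := by
    by_contra hn
    exact sep P R Q hQD (fun E hE hED => by rcases hcover E hE hED with h' | h' | h' <;> tauto) hn
  refine ⟨h4, P, hPT, D, hD, hPD, ?_⟩
  intro E hE
  by_cases hED : E = D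
  · subst hED; exact Col.triv_right P E
  rcases hcover E hE hED with h' | h' | h'
  · rw [h']; exact Col.triv_mid P D
  · rw [h']; exact (col_perm c1).1
  · rw [h']; exact (col_perm c2).1

lemma NS2_card_ne_five {T : Finset Pt} (h : NS 2 T)
    (hno4 : ∀ U ∈ T, ∀ V ∈ T, U ≠ V → (colF T U V).card ≤ 3)
    (hc : T.card = 5) : False := by
  have hne : T.Nonempty := by rw [← Finset.card_pos, hc]; omega
  obtain ⟨D, hD⟩ := hne
  have he : (T.erase D).card = 4 := by rw [Finset.card_erase_of_mem hD, hc]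
  obtain ⟨P, Q, R, W, hPQ, hPR, hPW, hQR, hQW, hRW, hset⟩ := extract4 he
  have hPe : P ∈ T.erase D := by rw [hset]; simp
  have hQe : Q ∈ T.erase D := by rw [hset]; simp
  have hRe : R ∈ T.erase D := by rw [hset]; simp
  have hWe : W ∈ T.erase D := by rw [hset]; simp
  have hPT : P ∈ T := Finset.mem_of_mem_erase hPe
  have hQT : Q ∈ T := Finset.mem_of_mem_erase hQe
  have hRT : R ∈ T := Finset.mem_of_mem_erase hRe
  have hWT : W ∈ T := Finset.mem_of_mem_erase hWe
  have hPD : P ≠ D := (Finset.mem_erase.mp hPe).1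
  have hQD : Q ≠ D := (Finset.mem_erase.mp hQe).1
  have hRD : R ≠ D := (Finset.mem_erase.mp hRe).1
  have hWD : W ≠ D := (Finset.mem_erase.mp hWe).1
  have hcover : ∀ E ∈ T, E ≠ D → E = P ∨ E = Q ∨ E = R ∨ E = W := by
    intro E hE hED
    have : E ∈ T.erase D := Finset.mem_erase.mpr ⟨hED, hE⟩
    rw [hset] at this
    simpa using this
  -- separator: a good pairing kills NS
  have sep : ∀ U V U' V' : Pt,
      (∀ E ∈ T, E ≠ D → (E = U ∨ E = V) ∨ (E = U' ∨ E = V')) →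
      ¬ Col U V D → ¬ Col U' V' D → False := by
    intro U V U' V' hcover' hn1 hn2
    set q : Poly2 := line2 U V * line2 U' V' with hq
    have hdeg : q.totalDegree ≤ 2 := by
      refine (totalDegree_mul _ _).trans ?_
      have := totalDegree_line2_le U V
      have := totalDegree_line2_le U' V'
      omega
    have hvan : ∀ E ∈ T, E ≠ D → evalPt E q = 0 := by
      intro E hE hED
      rw [hq, evalPt_mul]
      rcases hcover' E hE hED with (h' | h') | (h' | h')
      · rw [h', evalPt_line2_eq_zero_iff.mpr (Col.triv_mid U V), zero_mul]
      · rw [h', evalPt_line2_eq_zero_iff.mpr (Col.triv_right U V), zero_mul]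
      · rw [h', evalPt_line2_eq_zero_iff.mpr (Col.triv_mid U' V'), mul_zero]
      · rw [h', evalPt_line2_eq_zero_iff.mpr (Col.triv_right U' V'), mul_zero]
    have hval := h D hD q hdeg hvan
    rw [hq, evalPt_mul] at hval
    rcases mul_eq_zero.mp hval with h0 | h0
    · exact hn1 (evalPt_line2_eq_zero_iff.mp h0)
    · exact hn2 (evalPt_line2_eq_zero_iff.mp h0)
  -- four-points-on-a-line contradiction
  have four : ∀ U V A B : Pt, U ∈ T → V ∈ T → A ∈ T → B ∈ T →
      U ≠ V → U ≠ A → U ≠ B → V ≠ A → V ≠ B → A ≠ B →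
      Col U V A → Col U V B → False := by
    intro U V A B hU hV hA hB hUV hUA hUB hVA hVB hAB cA cB
    have hsub : ({U, V, A, B} : Finset Pt) ⊆ colF T U V := by
      intro x hx
      simp only [Finset.mem_insert, Finset.mem_singleton] at hx
      rcases hx with h' | h' | h' | h'
      · rw [h']; exact mem_colF.mpr ⟨hU, Col.triv_mid U V⟩
      · rw [h']; exact mem_colF.mpr ⟨hV, Col.triv_right U V⟩
      · rw [h']; exact mem_colF.mpr ⟨hA, cA⟩
      · rw [h']; exact mem_colF.mpr ⟨hB, cB⟩
    have hge : 4 ≤ (colF T U V).card := by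
      calc 4 = ({U, V, A, B} : Finset Pt).card :=
          (card_four_set hUV hUA hUB hVA hVB hAB).symm
        _ ≤ _ := Finset.card_le_card hsub
    have := hno4 U hU V hV hUV
    omega
  -- aux : if Col x y D holds then the cross pairing (x,z),(y,w) separates
  have aux : ∀ x y z w : Pt, x ∈ T → y ∈ T → z ∈ T → w ∈ T →
      x ≠ D → y ≠ D → z ≠ D → w ≠ D →
      x ≠ y → x ≠ z → x ≠ w → y ≠ z → y ≠ w → z ≠ w →
      (∀ E ∈ T, E ≠ D → E = x ∨ E = y ∨ E = z ∨ E = w) →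
      Col x y D → False := by
    intro x y z w hx hy hz hw hxD hyD hzD hwD hxy hxz hxw hyz hyw hzw hcov hcol
    have n1 : ¬ Col x z D := by
      intro hc
      exact four x D y z hx hD hy hz hxD hxy hxz (Ne.symm hyD) (Ne.symm hzD) hyz
        (col_perm hcol).1 (col_perm hc).1
    have n2 : ¬ Col y w D := by
      intro hc
      exact four y D x w hy hD hx hw hyD (Ne.symm hxy) hyw (Ne.symm hxD) (Ne.symm hwD) hxw
        (col_perm (col_perm hcol).2.1).1 (col_perm hc).1
    exact sep x z y w (fun E hE hED => by rcases hcov E hE hED with h' | h' | h' | h' <;> tauto)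
      n1 n2
  by_cases c1 : Col P Q D
  · exact aux P Q R W hPT hQT hRT hWT hPD hQD hRD hWD hPQ hPR hPW hQR hQW hRW hcover c1
  by_cases c2 : Col R W D
  · exact aux R W P Q hRT hWT hPT hQT hRD hWD hPD hQD hRW (Ne.symm hPR) (Ne.symm hQR)
      (Ne.symm hPW) (Ne.symm hQW) hPQ
      (fun E hE hED => by rcases hcover E hE hED with h' | h' | h' | h' <;> tauto) c2
  · exact sep P Q R W (fun E hE hED => by rcases hcover E hE hED with h' | h' | h' | h' <;> tauto)
      c1 c2

lemma classify {S : Finset Pt} (h : NS 3 S) (hne : S.Nonempty) (hc : S.card ≤ 8)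
    (h4 : ∀ U ∈ S, ∀ V ∈ S, U ≠ V → (colF S U V).card ≤ 4)
    (L : Fin 3 → Pt → Prop)
    (hcov : ∀ P ∈ S, ∃ i, L i P)
    (hlin : ∀ i, ∀ P Q R : Pt, L i P → L i Q → L i R → Col P Q R) :
    ∃ U ∈ S, ∃ V ∈ S, ∃ U' ∈ S, ∃ V' ∈ S, U ≠ V ∧ U' ≠ V' ∧
      (colF S U V).card = 4 ∧
      (colF S U' V').card = 4 ∧
      Disjoint (colF S U V) (colF S U' V') := by
  have hS5 : 5 ≤ S.card := by
    by_contra hlt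
    exact h.card_gt hne (by omega)
  have residual : ∀ U V : Pt, NS 2 (S.filter (fun P => evalPt P (line2 U V) ≠ 0)) :=
    fun U V => h.step (totalDegree_line2_le U V)
  have card_split : ∀ U V : Pt, (colF S U V).card
      + (S.filter (fun P => evalPt P (line2 U V) ≠ 0)).card = S.card := by
    intro U V
    have e1 : S.filter (fun P => evalPt P (line2 U V) = 0) = colF S U V := by
      ext P
      simp only [Finset.mem_filter, colF, evalPt_line2_eq_zero_iff]
    rw [← e1]
    exact Finset.card_filter_add_card_filter_not (fun P => evalPt P (line2 U V) = 0)
  by_cases k4 : ∃ U, U ∈ S ∧ ∃ V, V ∈ S ∧ U ≠ V ∧ (colF S U V).card = 4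
  · obtain ⟨U, hU, V, hV, hUV, hM⟩ := k4
    obtain ⟨S₁, hS₁⟩ : ∃ T, T = S.filter (fun P => evalPt P (line2 U V) ≠ 0) := ⟨_, rfl⟩
    have hres : NS 2 S₁ := by rw [hS₁]; exact residual U V
    have hsplit : (colF S U V).card + S₁.card = S.card := by
      rw [hS₁]; exact card_split U V
    have hne1 : S₁.Nonempty := by rw [← Finset.card_pos]; omega
    have hle1 : S₁.card ≤ 4 := by omega
    obtain ⟨h41, U', hU', V', hV', hUV', hcol⟩ := NS2_classify hres hne1 hle1
    have hU'S : U' ∈ S := by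
      rw [hS₁] at hU'; exact (Finset.mem_filter.mp hU').1
    have hV'S : V' ∈ S := by
      rw [hS₁] at hV'; exact (Finset.mem_filter.mp hV').1
    have hsub : S₁ ⊆ colF S U' V' := by
      intro P hP
      have hPS : P ∈ S := by
        rw [hS₁] at hP; exact (Finset.mem_filter.mp hP).1
      exact mem_colF.mpr ⟨hPS, hcol P hP⟩
    have hcard2 : (colF S U' V').card = 4 := by
      have hle := h4 U' hU'S V' hV'S hUV'
      have hge := Finset.card_le_card hsub
      omega
    have heq : S₁ = colF S U' V' :=
      Finset.eq_of_subset_of_card_le hsub (by omega)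
    refine ⟨U, hU, V, hV, U', hU'S, V', hV'S, hUV, hUV', hM, hcard2, ?_⟩
    rw [← heq, Finset.disjoint_left]
    intro P hP hP1
    have h1 : evalPt P (line2 U V) = 0 :=
      evalPt_line2_eq_zero_iff.mpr (mem_colF.mp hP).2
    rw [hS₁] at hP1
    exact (Finset.mem_filter.mp hP1).2 h1
  have h3' : ∀ U ∈ S, ∀ V ∈ S, U ≠ V → (colF S U V).card ≤ 3 := by
    intro U hU V hV hUV
    have := h4 U hU V hV hUV
    rcases Nat.lt_or_ge (colF S U V).card 4 with hlt | hge
    · omega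
    · exact absurd ⟨U, hU, V, hV, hUV, by omega⟩ k4
  exfalso
  by_cases k3 : ∃ U, U ∈ S ∧ ∃ V, V ∈ S ∧ U ≠ V ∧ (colF S U V).card = 3
  · obtain ⟨U, hU, V, hV, hUV, hM⟩ := k3
    obtain ⟨S₁, hS₁⟩ : ∃ T, T = S.filter (fun P => evalPt P (line2 U V) ≠ 0) := ⟨_, rfl⟩
    have hNS1 : NS 2 S₁ := by rw [hS₁]; exact residual U V
    have hsplit : (colF S U V).card + S₁.card = S.card := by
      rw [hS₁]; exact card_split U V
    have hmemS : ∀ P, P ∈ S₁ → P ∈ S := by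
      intro P hP
      rw [hS₁] at hP
      exact (Finset.mem_filter.mp hP).1
    have hno4 : ∀ U' ∈ S₁, ∀ V' ∈ S₁, U' ≠ V' →
        (colF S₁ U' V').card ≤ 3 := by
      intro U' hU' V' hV' hUV'
      have hsub : colF S₁ U' V' ⊆ colF S U' V' := by
        intro P hP
        obtain ⟨hP1, hP2⟩ := mem_colF.mp hP
        exact mem_colF.mpr ⟨hmemS P hP1, hP2⟩
      exact (Finset.card_le_card hsub).trans
        (h3' U' (hmemS U' hU') V' (hmemS V' hV') hUV')
    rcases Nat.lt_or_ge S₁.card 4 with hlt | hge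
    · exact hNS1.card_gt (by rw [← Finset.card_pos]; omega) (by omega)
    rcases Nat.lt_or_ge S₁.card 5 with hlt5 | hge5
    · obtain ⟨_, U', hU', V', hV', hUV', hcol⟩ :=
        NS2_classify hNS1 (by rw [← Finset.card_pos]; omega) (by omega)
      have hsub : S₁ ⊆ colF S U' V' := fun P hP =>
        mem_colF.mpr ⟨hmemS P hP, hcol P hP⟩
      have hle := Finset.card_le_card hsub
      have := h3' U' (hmemS U' hU') V' (hmemS V' hV') hUV'
      omega
    · exact NS2_card_ne_five hNS1 hno4 (by omega)
  have h2' : ∀ U ∈ S, ∀ V ∈ S, U ≠ V → (colF S U V).card ≤ 2 := by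
    intro U hU V hV hUV
    have := h3' U hU V hV hUV
    rcases Nat.lt_or_ge (colF S U V).card 3 with hlt | hge
    · omega
    · exact absurd ⟨U, hU, V, hV, hUV, by omega⟩ k3
  have noCol : ∀ U V E : Pt, U ∈ S → V ∈ S → E ∈ S → U ≠ V → E ≠ U → E ≠ V →
      ¬ Col U V E := by
    intro U V E hU hV hE hUV hEU hEV hc'
    have hsub : ({U, V, E} : Finset Pt) ⊆ colF S U V := by
      intro x hx
      simp only [Finset.mem_insert, Finset.mem_singleton] at hx
      rcases hx with h' | h' | h'
      · rw [h']; exact mem_colF.mpr ⟨hU, Col.triv_mid U V⟩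
      · rw [h']; exact mem_colF.mpr ⟨hV, Col.triv_right U V⟩
      · rw [h']; exact mem_colF.mpr ⟨hE, hc'⟩
    have h3c : ({U, V, E} : Finset Pt).card = 3 := by
      rw [Finset.card_insert_of_notMem (by simp [hUV, Ne.symm hEU]),
        Finset.card_insert_of_notMem (by simp [Ne.symm hEV]), Finset.card_singleton]
    have hg := Finset.card_le_card hsub
    have := h2' U hU V hV hUV
    omega
  -- covering bound : |S| ≤ 6
  have hS6 : S.card ≤ 6 := by
    have hfl : ∀ i : Fin 3, (S.filter (fun P => L i P)).card ≤ 2 := by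
      intro i
      by_contra hgt
      push_neg at hgt
      obtain ⟨T', hT'sub, hT'card⟩ := Finset.exists_subset_card_eq hgt
      obtain ⟨P, Q, R, hPQ, hPR, hQR, hset⟩ := extract3 hT'card
      have hP : P ∈ S.filter (fun P => L i P) := hT'sub (by rw [hset]; simp)
      have hQ : Q ∈ S.filter (fun P => L i P) := hT'sub (by rw [hset]; simp)
      have hR : R ∈ S.filter (fun P => L i P) := hT'sub (by rw [hset]; simp)
      exact noCol P Q R (Finset.mem_filter.mp hP).1 (Finset.mem_filter.mp hQ).1
        (Finset.mem_filter.mp hR).1 hPQ (Ne.symm hPR) (Ne.symm hQR)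
        (hlin i P Q R (Finset.mem_filter.mp hP).2 (Finset.mem_filter.mp hQ).2
          (Finset.mem_filter.mp hR).2)
    have hsub : S ⊆ ((S.filter (fun P => L 0 P)) ∪ (S.filter (fun P => L 1 P)))
        ∪ (S.filter (fun P => L 2 P)) := by
      intro P hP
      obtain ⟨i, hi⟩ := hcov P hP
      simp only [Finset.mem_union, Finset.mem_filter]
      fin_cases i
      · exact Or.inl (Or.inl ⟨hP, hi⟩)
      · exact Or.inl (Or.inr ⟨hP, hi⟩)
      · exact Or.inr ⟨hP, hi⟩
    calc S.card ≤ _ := Finset.card_le_card hsub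
      _ ≤ ((S.filter (fun P => L 0 P)) ∪ (S.filter (fun P => L 1 P))).card
          + (S.filter (fun P => L 2 P)).card := Finset.card_union_le _ _
      _ ≤ (S.filter (fun P => L 0 P)).card + (S.filter (fun P => L 1 P)).card
          + (S.filter (fun P => L 2 P)).card := by
            have := Finset.card_union_le (S.filter (fun P => L 0 P)) (S.filter (fun P => L 1 P))
            omega
      _ ≤ 6 := by
            have := hfl 0
            have := hfl 1
            have := hfl 2
            omega
  -- final separator contradictions for |S| = 5 or 6
  obtain ⟨D, hD⟩ := hne
  have herase : (S.erase D).card = S.card - 1 := Finset.card_erase_of_mem hD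
  rcases Nat.lt_or_ge S.card 6 with h5c | h6c
  · -- S.card = 5
    have he4 : (S.erase D).card = 4 := by omega
    obtain ⟨P, Q, R, W, hPQ, hPR, hPW, hQR, hQW, hRW, hset⟩ := extract4 he4
    have hPe : P ∈ S.erase D := by rw [hset]; simp
    have hQe : Q ∈ S.erase D := by rw [hset]; simp
    have hRe : R ∈ S.erase D := by rw [hset]; simp
    have hWe : W ∈ S.erase D := by rw [hset]; simp
    set q : Poly2 := line2 P Q * line2 R W with hq
    have hdeg : q.totalDegree ≤ 3 := by
      refine (totalDegree_mul _ _).trans ?_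
      have := totalDegree_line2_le P Q
      have := totalDegree_line2_le R W
      omega
    have hvan : ∀ E ∈ S, E ≠ D → evalPt E q = 0 := by
      intro E hE hED
      have hEe : E ∈ S.erase D := Finset.mem_erase.mpr ⟨hED, hE⟩
      rw [hset] at hEe
      simp only [Finset.mem_insert, Finset.mem_singleton] at hEe
      rw [hq, evalPt_mul]
      rcases hEe with h' | h' | h' | h'
      · rw [h', evalPt_line2_eq_zero_iff.mpr (Col.triv_mid P Q), zero_mul]
      · rw [h', evalPt_line2_eq_zero_iff.mpr (Col.triv_right P Q), zero_mul]
      · rw [h', evalPt_line2_eq_zero_iff.mpr (Col.triv_mid R W), mul_zero]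
      · rw [h', evalPt_line2_eq_zero_iff.mpr (Col.triv_right R W), mul_zero]
    have hval := h D hD q hdeg hvan
    rw [hq, evalPt_mul] at hval
    rcases mul_eq_zero.mp hval with h0 | h0
    · exact noCol P Q D (Finset.mem_of_mem_erase hPe) (Finset.mem_of_mem_erase hQe) hD hPQ
        (Ne.symm (Finset.mem_erase.mp hPe).1) (Ne.symm (Finset.mem_erase.mp hQe).1)
        (evalPt_line2_eq_zero_iff.mp h0)
    · exact noCol R W D (Finset.mem_of_mem_erase hRe) (Finset.mem_of_mem_erase hWe) hD hRW
        (Ne.symm (Finset.mem_erase.mp hRe).1) (Ne.symm (Finset.mem_erase.mp hWe).1)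
        (evalPt_line2_eq_zero_iff.mp h0)
  · -- S.card = 6
    have he5 : (S.erase D).card = 5 := by omega
    obtain ⟨P, Q, R, W, V, hPQ, hPR, hPW, hPV, hQR, hQW, hQV, hRW, hRV, hWV, hset⟩ :=
      extract5 he5
    have hPe : P ∈ S.erase D := by rw [hset]; simp
    have hQe : Q ∈ S.erase D := by rw [hset]; simp
    have hRe : R ∈ S.erase D := by rw [hset]; simp
    have hWe : W ∈ S.erase D := by rw [hset]; simp
    have hVe : V ∈ S.erase D := by rw [hset]; simp
    set q : Poly2 := line2 P Q * line2 R W * lineAvoid V D with hq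
    have hdeg : q.totalDegree ≤ 3 := by
      refine (totalDegree_mul _ _).trans ?_
      have h1 : (line2 P Q * line2 R W).totalDegree ≤ 2 := by
        refine (totalDegree_mul _ _).trans ?_
        have := totalDegree_line2_le P Q
        have := totalDegree_line2_le R W
        omega
      have := totalDegree_lineAvoid_le V D
      omega
    have hvan : ∀ E ∈ S, E ≠ D → evalPt E q = 0 := by
      intro E hE hED
      have hEe : E ∈ S.erase D := Finset.mem_erase.mpr ⟨hED, hE⟩
      rw [hset] at hEe
      simp only [Finset.mem_insert, Finset.mem_singleton] at hEe
      rw [hq, evalPt_mul, evalPt_mul]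
      rcases hEe with h' | h' | h' | h' | h'
      · rw [h', evalPt_line2_eq_zero_iff.mpr (Col.triv_mid P Q), zero_mul, zero_mul]
      · rw [h', evalPt_line2_eq_zero_iff.mpr (Col.triv_right P Q), zero_mul, zero_mul]
      · rw [h', evalPt_line2_eq_zero_iff.mpr (Col.triv_mid R W), mul_zero, zero_mul]
      · rw [h', evalPt_line2_eq_zero_iff.mpr (Col.triv_right R W), mul_zero, zero_mul]
      · rw [h', evalPt_lineAvoid_self, mul_zero]
    have hval := h D hD q hdeg hvan
    rw [hq, evalPt_mul, evalPt_mul] at hval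
    rcases mul_eq_zero.mp hval with h0 | h0
    · rcases mul_eq_zero.mp h0 with h1 | h1
      · exact noCol P Q D (Finset.mem_of_mem_erase hPe) (Finset.mem_of_mem_erase hQe) hD hPQ
          (Ne.symm (Finset.mem_erase.mp hPe).1) (Ne.symm (Finset.mem_erase.mp hQe).1)
          (evalPt_line2_eq_zero_iff.mp h1)
      · exact noCol R W D (Finset.mem_of_mem_erase hRe) (Finset.mem_of_mem_erase hWe) hD hRW
          (Ne.symm (Finset.mem_erase.mp hRe).1) (Ne.symm (Finset.mem_erase.mp hWe).1)
          (evalPt_line2_eq_zero_iff.mp h1)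
    · exact evalPt_lineAvoid_ne V D (Ne.symm (Finset.mem_erase.mp hVe).1) h0

/-! ### existence of a linear dependency among 11 evaluation functionals on cubics -/

lemma aeval_eq_evalPt (P : Pt) (q : Poly2) : (aeval P) q = evalPt P q := by
  rw [evalPt, ← coe_aeval_eq_eval]
  rfl

lemma exists_dependency {X' : Finset Pt} (hcard : X'.card = 11) :
    ∃ c : Pt → ℝ, (∃ P ∈ X', c P ≠ 0) ∧ (∀ P, c P ≠ 0 → P ∈ X') ∧
      ∀ q : Poly2, q.totalDegree ≤ 3 → ∑ P ∈ X', c P * evalPt P q = 0 := by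
  classical
  set V : Submodule ℝ Poly2 := MvPolynomial.restrictTotalDegree (Fin 2) ℝ 3 with hV
  -- a spanning set of 10 monomials
  set G : Finset Poly2 :=
    ((Finset.range 4 ×ˢ Finset.range 4).filter (fun ij => ij.1 + ij.2 ≤ 3)).image
      (fun ij => (monomial (Finsupp.single 0 ij.1 + Finsupp.single 1 ij.2) (1 : ℝ))) with hG
  have hGcard : G.card ≤ 10 := by
    refine (Finset.card_image_le).trans ?_
    have : ((Finset.range 4 ×ˢ Finset.range 4).filter (fun ij => ij.1 + ij.2 ≤ 3)).card = 10 := by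
      decide
    omega
  have hspan : V ≤ Submodule.span ℝ (G : Set Poly2) := by
    intro p hp
    rw [hV, MvPolynomial.mem_restrictTotalDegree] at hp
    rw [p.as_sum]
    refine Submodule.sum_mem _ ?_
    intro s hs
    have hs2 : s = Finsupp.single 0 (s 0) + Finsupp.single 1 (s 1) := by
      ext i; fin_cases i <;> simp [Finsupp.single_apply]
    have hsum : s.sum (fun _ e => e) = s 0 + s 1 := by
      rw [Finsupp.sum_fintype] <;> simp [Fin.sum_univ_two]
    have hle : s 0 + s 1 ≤ 3 := by
      rw [← hsum]; exact (le_totalDegree hs).trans hp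
    have hmem : (monomial s (1 : ℝ)) ∈ G := by
      rw [hG]
      refine Finset.mem_image.mpr ⟨(s 0, s 1), ?_, by rw [← hs2]⟩
      refine Finset.mem_filter.mpr ⟨?_, by omega⟩
      refine Finset.mem_product.mpr ⟨?_, ?_⟩ <;> simp <;> omega
    have : monomial s (coeff s p) = (coeff s p) • monomial s (1 : ℝ) := by
      rw [MvPolynomial.smul_monomial, smul_eq_mul, mul_one]
    rw [this]
    exact Submodule.smul_mem _ _ (Submodule.subset_span hmem)
  haveI hfinspan : FiniteDimensional ℝ (Submodule.span ℝ (G : Set Poly2)) :=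
    FiniteDimensional.span_of_finite ℝ (Finset.finite_toSet G)
  have hrankV : Module.finrank ℝ V ≤ 10 := by
    calc Module.finrank ℝ V ≤ Module.finrank ℝ (Submodule.span ℝ (G : Set Poly2)) :=
        Submodule.finrank_mono hspan
      _ ≤ G.card := finrank_span_finset_le_card G
      _ ≤ 10 := hGcard
  -- the evaluation functionals
  set f : {x // x ∈ X'} → Module.Dual ℝ V :=
    fun P => ((aeval (P : Pt)).toLinearMap).comp V.subtype with hf
  have hnli : ¬ LinearIndependent ℝ f := by
    intro hli
    have h1 : Fintype.card {x // x ∈ X'} ≤ Module.finrank ℝ (Module.Dual ℝ V) :=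
      hli.fintype_card_le_finrank
    rw [Subspace.dual_finrank_eq, Fintype.card_coe, hcard] at h1
    omega
  obtain ⟨g, hgsum, i0, hgi0⟩ := Fintype.not_linearIndependent_iff.mp hnli
  refine ⟨fun P => if h : P ∈ X' then g ⟨P, h⟩ else 0, ⟨i0, i0.2, by simp [hgi0]⟩, ?_, ?_⟩
  · intro P hP
    by_contra hPX
    simp [hPX] at hP
  · intro q hq
    have hqV : q ∈ V := by rw [hV, MvPolynomial.mem_restrictTotalDegree]; exact hq
    have happ := congrArg (fun φ : Module.Dual ℝ V => φ ⟨q, hqV⟩) hgsum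
    simp only [LinearMap.zero_apply] at happ
    rw [LinearMap.sum_apply] at happ
    have : ∀ i : {x // x ∈ X'}, (g i • f i) ⟨q, hqV⟩ = g i * evalPt (i : Pt) q := by
      intro i
      rw [LinearMap.smul_apply, smul_eq_mul]
      congr 1
    rw [Finset.sum_congr rfl (fun i _ => this i)] at happ
    rw [← Finset.sum_attach X' (fun P => (if h : P ∈ X' then g ⟨P, h⟩ else 0) * evalPt P q)]
    rw [← happ]
    refine Finset.sum_congr rfl ?_
    intro i _
    rw [dif_pos i.2]

/-! ### fundamental polynomials and node decomposition -/

lemma fund_unique {X : Finset Pt} (hP : Poised 4 X) {D : Pt} {p q : Poly2}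
    (hp : IsFund 4 X D p) (hq : IsFund 4 X D q) : p = q := by
  obtain ⟨r, _, hru⟩ := hP (fun B => if B = D then 1 else 0)
  have key : ∀ s : Poly2, IsFund 4 X D s → s = r := by
    intro s hs
    refine hru s ⟨hs.1, ?_⟩
    intro B hB
    by_cases hBD : B = D
    · rw [if_pos hBD, hBD]
      exact hs.2.1
    · rw [if_neg hBD]
      exact hs.2.2 B hB hBD
  rw [key p hp, key q hq]

lemma col_of_isLine {m : Poly2} (hm : IsLine m) {P Q R : Pt}
    (hP : evalPt P m = 0) (hQ : evalPt Q m = 0) (hR : evalPt R m = 0) : Col P Q R := by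
  obtain ⟨a, b, c, hrep⟩ := exists_mkL_rep hm.le
  have hab : a ≠ 0 ∨ b ≠ 0 := by
    by_contra hcon
    push_neg at hcon
    rw [hrep, hcon.1, hcon.2] at hm
    unfold IsLine at hm
    rw [show mkL 0 0 c = C c from by rw [mkL]; simp] at hm
    rw [totalDegree_C] at hm
    omega
  rw [hrep, evalPt_mkL] at hP hQ hR
  exact col_of_line hab hP hQ hR

lemma line2_coeff_ne {U V : Pt} (hUV : U ≠ V) : (V 1 - U 1) ≠ 0 ∨ (U 0 - V 0) ≠ 0 := by
  rcases pt_ne hUV with h0 | h0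
  · exact Or.inr (by intro hc; exact h0 (by linarith))
  · exact Or.inl h0

lemma line2_dvd {U V : Pt} (hUV : U ≠ V) {p : Poly2} {d : ℕ} (hd : p.totalDegree ≤ d)
    {T : Finset Pt} (hT : d < T.card) (hline : ∀ P ∈ T, evalPt P (line2 U V) = 0)
    (hvan : ∀ P ∈ T, evalPt P p = 0) : line2 U V ∣ p := by
  refine vanish_dvd (line2_coeff_ne hUV) hd hT ?_ hvan
  intro P hP
  have := hline P hP
  rw [line2, evalPt_mkL] at this
  exact this

lemma prime_line2 {U V : Pt} (hUV : U ≠ V) : Prime (line2 U V) :=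
  prime_mkL (line2_coeff_ne hUV)

lemma node_decomp {X : Finset Pt} (hPo : Poised 4 X) {D : Pt} (hD : D ∈ X)
    (f : Fin 4 → Poly2) (hfl : ∀ i, IsLine (f i)) (hff : IsFund 4 X D (∏ i, f i))
    {ℓ : Poly2} {a b c : ℝ} (hrep : ℓ = mkL a b c) (hab : a ≠ 0 ∨ b ≠ 0)
    (hU : Uses 4 X D ℓ) :
    ∃ q : Poly2, (∏ i, f i) = ℓ * q ∧ q.totalDegree ≤ 3 ∧
      evalPt D ℓ ≠ 0 ∧ evalPt D q ≠ 0 ∧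
      (∀ P ∈ X, P ≠ D → evalPt P ℓ ≠ 0 → evalPt P q = 0) ∧
      ∃ i : Fin 4, ∀ P : Pt, evalPt P q = 0 → ∃ j, j ≠ i ∧ evalPt P (f j) = 0 := by
  have hlprime : Prime ℓ := by rw [hrep]; exact prime_mkL hab
  -- ℓ divides the fundamental polynomial
  obtain ⟨p', hp'f, hdvd⟩ := hU
  have hp'eq : p' = ∏ i, f i := fund_unique hPo hp'f hff
  rw [hp'eq] at hdvd
  obtain ⟨i, _, hdvdi⟩ := hlprime.exists_mem_finset_dvd hdvd
  -- the factor f i is proportional to ℓ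
  obtain ⟨a', b', c', hrep'⟩ := exists_mkL_rep (hfl i).le
  have hab' : a' ≠ 0 ∨ b' ≠ 0 := by
    by_contra hcon
    push_neg at hcon
    have := hfl i
    rw [hrep', hcon.1, hcon.2] at this
    unfold IsLine at this
    rw [show mkL 0 0 c' = C c' from by rw [mkL]; simp, totalDegree_C] at this
    omega
  obtain ⟨g, hg⟩ := hdvdi
  have hz : ∀ P : Pt, a * P 0 + b * P 1 + c = 0 → a' * P 0 + b' * P 1 + c' = 0 := by
    intro P hP0
    have h1 : evalPt P (f i) = 0 := by
      rw [hg, evalPt_mul, hrep, evalPt_mkL]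
      rw [show a * P 0 + b * P 1 + c = 0 from hP0]
      ring
    rw [hrep', evalPt_mkL] at h1
    exact h1
  obtain ⟨κ, hκ, hprop⟩ := line_proportional hab hab' hz
  have hfi : f i = C κ * ℓ := by rw [hrep', hprop, hrep]
  set q : Poly2 := C κ * ∏ j ∈ Finset.univ.erase i, f j with hq
  have hprod : (∏ j, f j) = ℓ * q := by
    rw [hq, ← Finset.mul_prod_erase _ _ (Finset.mem_univ i), hfi]
    ring
  have hdeg : q.totalDegree ≤ 3 := by
    rw [hq]
    refine (totalDegree_mul _ _).trans ?_
    have h1 : (∏ j ∈ Finset.univ.erase i, f j).totalDegree ≤ 3 := by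
      refine (totalDegree_finset_prod _ _).trans ?_
      calc ∑ j ∈ Finset.univ.erase i, (f j).totalDegree
          ≤ ∑ j ∈ Finset.univ.erase i, 1 :=
            Finset.sum_le_sum (fun j _ => (hfl j).le)
        _ = (Finset.univ.erase i).card := by simp
        _ = 3 := by rw [Finset.card_erase_of_mem (Finset.mem_univ i)]; simp
    rw [totalDegree_C]
    omega
  have hone : evalPt D ℓ * evalPt D q = 1 := by
    rw [← evalPt_mul, ← hprod]
    exact hff.2.1
  refine ⟨q, hprod, hdeg, left_ne_zero_of_mul_eq_one hone, right_ne_zero_of_mul_eq_one hone,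
    ?_, i, ?_⟩
  · intro P hPX hPD hPl
    have h0 : evalPt P (∏ j, f j) = 0 := hff.2.2 P hPX hPD
    rw [hprod, evalPt_mul] at h0
    exact (mul_eq_zero.mp h0).resolve_left hPl
  · intro P hP0
    rw [hq, evalPt_mul] at hP0
    have hκC : evalPt P (C κ) = κ := by simp [evalPt]
    rw [hκC] at hP0
    have h1 : evalPt P (∏ j ∈ Finset.univ.erase i, f j) = 0 :=
      (mul_eq_zero.mp hP0).resolve_left hκ
    rw [evalPt_prod] at h1
    obtain ⟨j, hj, hj0⟩ := Finset.prod_eq_zero_iff.mp h1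
    exact ⟨j, (Finset.mem_erase.mp hj).1, hj0⟩


lemma mem_nodesOn {X : Finset Pt} {ℓ : Poly2} {P : Pt} :
    P ∈ nodesOn X ℓ ↔ P ∈ X ∧ evalPt P ℓ = 0 := Finset.mem_filter

lemma isLine_rep {ℓ : Poly2} (hℓ : IsLine ℓ) :
    ∃ a b c : ℝ, ℓ = mkL a b c ∧ (a ≠ 0 ∨ b ≠ 0) := by
  obtain ⟨a, b, c, hrep⟩ := exists_mkL_rep hℓ.le
  refine ⟨a, b, c, hrep, ?_⟩
  by_contra hcon
  push_neg at hcon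
  rw [hrep, hcon.1, hcon.2] at hℓ
  unfold IsLine at hℓ
  rw [show mkL 0 0 c = C c from by rw [mkL]; simp, totalDegree_C] at hℓ
  omega

end Stmt7Aux

open Stmt7Aux in
/-- If three nodes of a `GC₄`-set of 15 nodes (no 5 collinear) use a common
4-node line `ℓ`, then they share two further 4-node lines. -/
theorem stmt7 (X : Finset (Fin 2 → ℝ)) (hGC : GCSet 4 X) (hcard : X.card = 15)
    (h5 : NoFiveCollinear X)
    (ℓ : Poly2) (hℓ : IsLine ℓ) (hk : (nodesOn X ℓ).card = 4)
    (A B C : Fin 2 → ℝ) (hA : A ∈ X) (hB : B ∈ X) (hC : C ∈ X)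
    (hAB : A ≠ B) (hAC : A ≠ C) (hBC : B ≠ C)
    (hUA : Uses 4 X A ℓ) (hUB : Uses 4 X B ℓ) (hUC : Uses 4 X C ℓ) :
    ∃ ℓ' ℓ'' : Poly2, IsLine ℓ' ∧ IsLine ℓ'' ∧
      (nodesOn X ℓ').card = 4 ∧ (nodesOn X ℓ'').card = 4 ∧
      (∃ p, IsFund 4 X A p ∧ ℓ * ℓ' * ℓ'' ∣ p) ∧
      (∃ p, IsFund 4 X B p ∧ ℓ * ℓ' * ℓ'' ∣ p) ∧
      (∃ p, IsFund 4 X C p ∧ ℓ * ℓ' * ℓ'' ∣ p) := by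
  classical
  obtain ⟨hPoised, hFund⟩ := hGC
  obtain ⟨la, lb, lc, hlrep, hlab⟩ := isLine_rep hℓ
  obtain ⟨fA, hflA, hffA⟩ := hFund A hA
  obtain ⟨fB, hflB, hffB⟩ := hFund B hB
  obtain ⟨fC, hflC, hffC⟩ := hFund C hC
  obtain ⟨qA, hprodA, hdegA, hlA, hqA, hvanA, iA, hcovA⟩ :=
    node_decomp hPoised hA fA hflA hffA hlrep hlab hUA
  obtain ⟨qB, hprodB, hdegB, hlB, hqB, hvanB, iB, hcovB⟩ :=
    node_decomp hPoised hB fB hflB hffB hlrep hlab hUB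
  obtain ⟨qC, hprodC, hdegC, hlC, hqC, hvanC, iC, hcovC⟩ :=
    node_decomp hPoised hC fC hflC hffC hlrep hlab hUC
  -- the 11 nodes off ℓ
  obtain ⟨X', hX'⟩ : ∃ T, T = X.filter (fun P => ¬ evalPt P ℓ = 0) := ⟨_, rfl⟩
  have hX'card : X'.card = 11 := by
    have hsplitX := Finset.card_filter_add_card_filter_not
      (s := X) (p := fun P => evalPt P ℓ = 0)
    have h1 : (X.filter (fun P => evalPt P ℓ = 0)).card = 4 := hk
    rw [hX']
    omega
  have hmemX' : ∀ P, P ∈ X' ↔ P ∈ X ∧ ¬ evalPt P ℓ = 0 := by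
    intro P
    rw [hX']
    exact Finset.mem_filter
  have hAX' : A ∈ X' := (hmemX' A).mpr ⟨hA, hlA⟩
  have hBX' : B ∈ X' := (hmemX' B).mpr ⟨hB, hlB⟩
  have hCX' : C ∈ X' := (hmemX' C).mpr ⟨hC, hlC⟩
  obtain ⟨cc, ⟨P₀, hP₀, hccP₀⟩, _, hccsum⟩ := exists_dependency hX'card
  -- cc vanishes at A, B, C
  have hkill : ∀ D ∈ X', ∀ q : Poly2, q.totalDegree ≤ 3 → evalPt D q ≠ 0 →
      (∀ P ∈ X', P ≠ D → evalPt P q = 0) → cc D = 0 := by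
    intro D hDX' q hq hDq hvan
    have hsum := hccsum q hq
    rw [Finset.sum_eq_single_of_mem D hDX'
      (fun P hP hPD => by rw [hvan P hP hPD]; ring)] at hsum
    exact (mul_eq_zero.mp hsum).resolve_right hDq
  have hccA : cc A = 0 := by
    refine hkill A hAX' qA hdegA hqA ?_
    intro P hP hPD
    obtain ⟨hPX, hPl⟩ := (hmemX' P).mp hP
    exact hvanA P hPX hPD hPl
  have hccB : cc B = 0 := by
    refine hkill B hBX' qB hdegB hqB ?_
    intro P hP hPD
    obtain ⟨hPX, hPl⟩ := (hmemX' P).mp hP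
    exact hvanB P hPX hPD hPl
  have hccC : cc C = 0 := by
    refine hkill C hCX' qC hdegC hqC ?_
    intro P hP hPD
    obtain ⟨hPX, hPl⟩ := (hmemX' P).mp hP
    exact hvanC P hPX hPD hPl
  -- the support of the dependency
  obtain ⟨S, hSdef⟩ : ∃ T, T = X'.filter (fun P => ¬ cc P = 0) := ⟨_, rfl⟩
  have hmemS : ∀ P, P ∈ S ↔ P ∈ X' ∧ ¬ cc P = 0 := by
    intro P
    rw [hSdef]
    exact Finset.mem_filter
  have hSne : S.Nonempty := ⟨P₀, (hmemS P₀).mpr ⟨hP₀, hccP₀⟩⟩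
  have hSX : ∀ P ∈ S, P ∈ X := fun P hP => ((hmemX' P).mp ((hmemS P).mp hP).1).1
  have hSl : ∀ P ∈ S, ¬ evalPt P ℓ = 0 := fun P hP => ((hmemX' P).mp ((hmemS P).mp hP).1).2
  have hAnS : A ∉ S := fun h => ((hmemS A).mp h).2 hccA
  have hBnS : B ∉ S := fun h => ((hmemS B).mp h).2 hccB
  have hCnS : C ∉ S := fun h => ((hmemS C).mp h).2 hccC
  have hS8 : S.card ≤ 8 := by
    have hCm : C ∈ (X'.erase A).erase B :=
      Finset.mem_erase.mpr ⟨hBC.symm, Finset.mem_erase.mpr ⟨hAC.symm, hCX'⟩⟩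
    have hBm : B ∈ X'.erase A := Finset.mem_erase.mpr ⟨hAB.symm, hBX'⟩
    have hsub : S ⊆ ((X'.erase A).erase B).erase C := by
      intro P hP
      obtain ⟨hPX', hPcc⟩ := (hmemS P).mp hP
      refine Finset.mem_erase.mpr ⟨?_, Finset.mem_erase.mpr ⟨?_, Finset.mem_erase.mpr
        ⟨?_, hPX'⟩⟩⟩
      · rintro rfl; exact hPcc hccC
      · rintro rfl; exact hPcc hccB
      · rintro rfl; exact hPcc hccA
    have hce : (((X'.erase A).erase B).erase C).card = 8 := by
      rw [Finset.card_erase_of_mem hCm, Finset.card_erase_of_mem hBm,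
        Finset.card_erase_of_mem hAX', hX'card]
    calc S.card ≤ _ := Finset.card_le_card hsub
      _ = 8 := hce
  have hNS : NS 3 S := by
    intro D hD q hq hvan
    obtain ⟨hDX', hccD⟩ := (hmemS D).mp hD
    have hsum := hccsum q hq
    rw [Finset.sum_eq_single_of_mem D hDX' ?_] at hsum
    · exact (mul_eq_zero.mp hsum).resolve_left hccD
    · intro P hPX' hPD
      by_cases hPS : P ∈ S
      · rw [hvan P hPS hPD]; ring
      · have h0 : cc P = 0 := by
          by_contra hne
          exact hPS ((hmemS P).mpr ⟨hPX', hne⟩)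
        rw [h0]; ring
  have h4S : ∀ U ∈ S, ∀ V ∈ S, U ≠ V → (colF S U V).card ≤ 4 := by
    intro U hU V hV hUV
    have hsub : colF S U V ⊆ nodesOn X (line2 U V) := by
      intro P hP
      obtain ⟨hPS, hPcol⟩ := mem_colF.mp hP
      exact mem_nodesOn.mpr ⟨hSX P hPS, evalPt_line2_eq_zero_iff.mpr hPcol⟩
    exact (Finset.card_le_card hsub).trans (h5 _ (isLine_line2 hUV))
  -- covering of S by the three lines of q_A
  have herase3 : (Finset.univ.erase iA).card = 3 := by
    rw [Finset.card_erase_of_mem (Finset.mem_univ iA)]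
    simp
  obtain ⟨j1, j2, j3, hj12, hj13, hj23, hjset⟩ := Finset.card_eq_three.mp herase3
  have hcov : ∀ P ∈ S, ∃ k : Fin 3,
      (fun k P => evalPt P (fA (![j1, j2, j3] k)) = 0) k P := by
    intro P hP
    have hPA : P ≠ A := fun h => hAnS (h ▸ hP)
    have hq0 : evalPt P qA = 0 := hvanA P (hSX P hP) hPA (hSl P hP)
    obtain ⟨j, hjne, hj0⟩ := hcovA P hq0
    have hjmem : j ∈ Finset.univ.erase iA :=
      Finset.mem_erase.mpr ⟨hjne, Finset.mem_univ j⟩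
    rw [hjset] at hjmem
    simp only [Finset.mem_insert, Finset.mem_singleton] at hjmem
    rcases hjmem with h' | h' | h'
    · exact ⟨0, show evalPt P (fA j1) = 0 from h' ▸ hj0⟩
    · exact ⟨1, show evalPt P (fA j2) = 0 from h' ▸ hj0⟩
    · exact ⟨2, show evalPt P (fA j3) = 0 from h' ▸ hj0⟩
  have hlin : ∀ k : Fin 3, ∀ P Q R : Pt,
      (fun k P => evalPt P (fA (![j1, j2, j3] k)) = 0) k P →
      (fun k P => evalPt P (fA (![j1, j2, j3] k)) = 0) k Q →
      (fun k P => evalPt P (fA (![j1, j2, j3] k)) = 0) k R → Col P Q R := by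
    intro k P Q R hp hq hr
    exact col_of_isLine (hflA _) hp hq hr
  obtain ⟨U, hU, V, hV, U', hU', V', hV', hUV, hUV', hc4, hc4', hdisj⟩ :=
    classify hNS hSne hS8 h4S _ hcov hlin
  -- the two lines
  have hsub' : colF S U V ⊆ nodesOn X (line2 U V) := by
    intro P hP
    obtain ⟨hPS, hPcol⟩ := mem_colF.mp hP
    exact mem_nodesOn.mpr ⟨hSX P hPS, evalPt_line2_eq_zero_iff.mpr hPcol⟩
  have hsub'' : colF S U' V' ⊆ nodesOn X (line2 U' V') := by
    intro P hP
    obtain ⟨hPS, hPcol⟩ := mem_colF.mp hP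
    exact mem_nodesOn.mpr ⟨hSX P hPS, evalPt_line2_eq_zero_iff.mpr hPcol⟩
  have hnodes' : colF S U V = nodesOn X (line2 U V) := by
    refine Finset.eq_of_subset_of_card_le hsub' ?_
    rw [hc4]
    exact h5 _ (isLine_line2 hUV)
  have hnodes'' : colF S U' V' = nodesOn X (line2 U' V') := by
    refine Finset.eq_of_subset_of_card_le hsub'' ?_
    rw [hc4']
    exact h5 _ (isLine_line2 hUV')
  -- divisibility engine for each of the three nodes
  have perNode : ∀ (D : Pt), D ∈ X → D ∉ S → ∀ (q : Poly2) (f : Fin 4 → Poly2),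
      (∏ i, f i) = ℓ * q → q.totalDegree ≤ 3 →
      (∀ P ∈ X, P ≠ D → evalPt P ℓ ≠ 0 → evalPt P q = 0) →
      ℓ * line2 U V * line2 U' V' ∣ ∏ i, f i := by
    intro D hDX hDnS q f hprod hdeg hvan
    have hvanS : ∀ T' : Finset Pt, T' ⊆ S → ∀ P ∈ T', evalPt P q = 0 := by
      intro T' hT' P hP
      have hPS := hT' hP
      have hPD : P ≠ D := fun h => hDnS (h ▸ hPS)
      exact hvan P (hSX P hPS) hPD (hSl P hPS)
    have hd1 : line2 U V ∣ q := by
      refine line2_dvd hUV hdeg (T := colF S U V) (by rw [hc4]; omega) ?_ ?_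
      · intro P hP
        exact evalPt_line2_eq_zero_iff.mpr (mem_colF.mp hP).2
      · exact hvanS _ (Finset.filter_subset _ _) -- colF S U V ⊆ S
    obtain ⟨h₁, hh₁⟩ := hd1
    have hd2 : line2 U' V' ∣ q := by
      refine line2_dvd hUV' hdeg (T := colF S U' V') (by rw [hc4']; omega) ?_ ?_
      · intro P hP
        exact evalPt_line2_eq_zero_iff.mpr (mem_colF.mp hP).2
      · exact hvanS _ (Finset.filter_subset _ _)
    have hnd : ¬ line2 U' V' ∣ line2 U V := by
      intro hdd
      obtain ⟨g, hg⟩ := hdd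
      have hz : evalPt U' (line2 U V) = 0 := by
        rw [hg, evalPt_mul, evalPt_line2_eq_zero_iff.mpr (Col.triv_mid U' V'), zero_mul]
      have hU'n : U' ∈ nodesOn X (line2 U V) := mem_nodesOn.mpr ⟨hSX U' hU', hz⟩
      rw [← hnodes'] at hU'n
      exact (Finset.disjoint_left.mp hdisj hU'n)
        (mem_colF.mpr ⟨hU', Col.triv_mid U' V'⟩)
    have hd2' : line2 U' V' ∣ h₁ := by
      have := (prime_line2 hUV').dvd_or_dvd (hh₁ ▸ hd2)
      exact this.resolve_left hnd
    obtain ⟨h₂, hh₂⟩ := hd2'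
    exact ⟨h₂, by rw [hprod, hh₁, hh₂]; ring⟩
  refine ⟨line2 U V, line2 U' V', isLine_line2 hUV, isLine_line2 hUV',
    by rw [← hnodes']; exact hc4, by rw [← hnodes'']; exact hc4', ?_, ?_, ?_⟩
  · exact ⟨∏ i, fA i, hffA, perNode A hA hAnS qA fA hprodA hdegA hvanA⟩
  · exact ⟨∏ i, fB i, hffB, perNode B hB hBnS qB fB hprodB hdegB hvanB⟩
  · exact ⟨∏ i, fC i, hffC, perNode C hC hCnS qC fC hprodC hdegC hvanC⟩
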